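/- Let p ∈ (1,2] and q be its conjugate exponent (1/p + 1/q = 1), and let f, g be nonnegative measurable functions with 0 < ‖f‖_p < ∞ and 0 < ‖g‖_q < ∞. For any ε > 0, if ‖fg‖₁ > (1-ε) ‖f‖_p ‖g‖_q, then ‖ f^p/‖f‖_p^p − fg/(‖f‖_p ‖g‖_q) ‖₁ ≤ √(2ε). -/

import Mathlib

open MeasureTheory

private lemma rpow_two' (x : ℝ) : x ^ (2:ℝ) = x ^ 2 := Real.rpow_two x

private lemma memLp_of_integrable_rpow {Z : Type*} [MeasurableSpace Z] {ν : Measure Z}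
    {u : Z → ℝ} (hu : ∀ z, 0 ≤ u z) (hm : AEStronglyMeasurable u ν)
    {r : ℝ} (hr : 0 < r) (h : Integrable (fun z => u z ^ r) ν) :
    MemLp u (ENNReal.ofReal r) ν := by
  have h0 : ENNReal.ofReal r ≠ 0 := ne_of_gt (ENNReal.ofReal_pos.2 hr)
  have htop : ENNReal.ofReal r ≠ ⊤ := ENNReal.ofReal_ne_top
  refine (memLp_norm_rpow_iff (p := ENNReal.ofReal r) (q := ENNReal.ofReal r) hm h0 htop).1 ?_
  rw [ENNReal.div_self h0 htop, ENNReal.toReal_ofReal hr.le, memLp_one_iff_integrable]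
  refine h.congr ?_
  filter_upwards with z
  rw [Real.norm_of_nonneg (hu z)]

private lemma holder_stability_normalized
    {Z : Type*} [MeasurableSpace Z] (ν : Measure Z)
    (F G : Z → ℝ)
    (hF : ∀ z, 0 ≤ F z) (hG : ∀ z, 0 ≤ G z)
    (hmF : Measurable F) (hmG : Measurable G)
    (p q : ℝ) (hp1 : 1 < p) (hp2 : p ≤ 2) (hconj : 1 / p + 1 / q = 1)
    (hintF : Integrable (fun z => F z ^ p) ν)
    (hintG : Integrable (fun z => G z ^ q) ν)
    (hintFG : Integrable (fun z => F z * G z) ν)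
    (hFone : ∫ z, F z ^ p ∂ν = 1) (hGone : ∫ z, G z ^ q ∂ν = 1)
    (ε : ℝ) (hε : 0 < ε)
    (hgap : ∫ z, F z * G z ∂ν > 1 - ε) :
    ∫ z, |F z ^ p - F z * G z| ∂ν ≤ Real.sqrt (2 * ε) := by
  have hp0 : (0:ℝ) < p := zero_lt_one.trans hp1
  have hpq : Real.HolderConjugate p q := Real.holderConjugate_iff.2 ⟨hp1, by
    rw [← one_div, ← one_div]; exact hconj⟩
  have hq1 : 1 < q := hpq.symm.lt
  have hq0 : (0:ℝ) < q := hpq.symm.pos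
  set R : Z → ℝ := fun z => F z ^ (p/2) - F z ^ (1 - p/2) * G z with hRdef
  -- pointwise identities
  have ha : ∀ z, (F z ^ (p/2)) ^ 2 = F z ^ p := by
    intro z
    rw [← rpow_two' (F z ^ (p/2)), ← Real.rpow_mul (hF z)]
    norm_num
  have hb : ∀ z, (F z ^ (1 - p/2)) ^ 2 = F z ^ (2 - p) := by
    intro z
    rw [← rpow_two' (F z ^ (1 - p/2)), ← Real.rpow_mul (hF z)]
    ring_nf
  have hab : ∀ z, F z ^ (p/2) * (F z ^ (1 - p/2) * G z) = F z * G z := by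
    intro z
    rw [← mul_assoc, ← Real.rpow_add' (hF z) (by norm_num : p/2 + (1 - p/2) ≠ 0)]
    norm_num
  have hRsq : ∀ z, R z ^ 2 = F z ^ p - 2 * (F z * G z) + F z ^ (2 - p) * G z ^ 2 := by
    intro z
    have h0 : R z ^ 2 = (F z ^ (p/2)) ^ 2 - 2 * (F z ^ (p/2) * (F z ^ (1 - p/2) * G z))
        + (F z ^ (1 - p/2)) ^ 2 * G z ^ 2 := by rw [hRdef]; ring
    rw [h0, ha, hb, hab]
  -- the remainder term: integrability and bound
  have hT : Integrable (fun z => F z ^ (2 - p) * G z ^ 2) ν ∧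
      ∫ z, F z ^ (2 - p) * G z ^ 2 ∂ν ≤ 1 := by
    rcases eq_or_lt_of_le hp2 with hp2' | hp2'
    · -- p = 2, so q = 2
      have hqv : q = 2 := by
        have hc := hconj
        rw [hp2'] at hc
        have h1q : 1/q = 1/2 := by linarith
        field_simp at h1q
        linarith
      have heq : (fun z => F z ^ (2 - p) * G z ^ 2) = fun z => G z ^ q := by
        funext z
        rw [hp2', hqv, sub_self, Real.rpow_zero, one_mul, rpow_two']
      rw [heq]
      exact ⟨hintG, le_of_eq hGone⟩
    · -- p < 2
      set r : ℝ := p / (2 - p) with hrdef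
      set s : ℝ := q / 2 with hsdef
      have h2p : (0:ℝ) < 2 - p := by linarith
      have hrs : Real.HolderConjugate r s := by
        rw [Real.holderConjugate_iff]
        constructor
        · rw [hrdef, lt_div_iff₀ h2p]
          linarith
        · rw [hrdef, hsdef]
          have hq0' : q ≠ 0 := ne_of_gt hq0
          have hp0' : p ≠ 0 := ne_of_gt hp0
          have hconj' : q + p = p * q := by
            field_simp at hconj
            linarith
          field_simp
          nlinarith [hconj']
      have hur : ∀ z, (F z ^ (2 - p)) ^ r = F z ^ p := by
        intro z
        rw [← Real.rpow_mul (hF z) (2-p) r]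
        congr 1
        rw [hrdef]
        field_simp
      have hvs : ∀ z, ((G z ^ 2 : ℝ)) ^ s = G z ^ q := by
        intro z
        rw [← rpow_two' (G z), ← Real.rpow_mul (hG z)]
        congr 1
        rw [hsdef]
        ring
      have hint1 : Integrable (fun z => (F z ^ (2-p)) ^ r) ν := by
        simp_rw [hur]; exact hintF
      have hint2 : Integrable (fun z => ((G z ^ 2 : ℝ)) ^ s) ν := by
        simp_rw [hvs]; exact hintG
      have hm1 : Measurable (fun z => F z ^ (2 - p)) := hmF.pow_const _
      have hm2 : Measurable (fun z => (G z ^ 2 : ℝ)) := hmG.pow_const 2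
      have hmem1 : MemLp (fun z => F z ^ (2 - p)) (ENNReal.ofReal r) ν :=
        memLp_of_integrable_rpow (fun z => Real.rpow_nonneg (hF z) _)
          hm1.aestronglyMeasurable hrs.pos hint1
      have hmem2 : MemLp (fun z => (G z ^ 2 : ℝ)) (ENNReal.ofReal s) ν :=
        memLp_of_integrable_rpow (fun z => sq_nonneg _)
          hm2.aestronglyMeasurable hrs.symm.pos hint2
      constructor
      · -- integrability via Young's inequality
        refine Integrable.mono' ((hintF.div_const r).add (hintG.div_const s))
          (hm1.mul hm2).aestronglyMeasurable ?_
        filter_upwards with z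
        rw [Real.norm_of_nonneg (mul_nonneg (Real.rpow_nonneg (hF z) _) (sq_nonneg _))]
        calc F z ^ (2-p) * G z ^ 2
            ≤ (F z ^ (2-p)) ^ r / r + ((G z ^ 2 : ℝ)) ^ s / s :=
              Real.young_inequality_of_nonneg (Real.rpow_nonneg (hF z) _) (sq_nonneg _) hrs
          _ = F z ^ p / r + G z ^ q / s := by rw [hur, hvs]
      · have hH := integral_mul_le_Lp_mul_Lq_of_nonneg hrs
          (Filter.Eventually.of_forall fun z => Real.rpow_nonneg (hF z) _)
          (Filter.Eventually.of_forall fun z => sq_nonneg (G z)) hmem1 hmem2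
        calc ∫ z, F z ^ (2-p) * G z ^ 2 ∂ν
            ≤ (∫ z, (F z ^ (2-p)) ^ r ∂ν) ^ (1/r) * (∫ z, ((G z ^ 2 : ℝ)) ^ s ∂ν) ^ (1/s) := hH
          _ = 1 := by
              simp_rw [hur, hvs]
              rw [hFone, hGone, Real.one_rpow, Real.one_rpow, mul_one]
  obtain ⟨hTint, hTle⟩ := hT
  -- integrability and bound on ∫ R²
  have hI1 : Integrable (fun z => F z ^ p - 2 * (F z * G z)) ν :=
    hintF.sub (hintFG.const_mul 2)
  have hI2 : Integrable (fun z => (F z ^ p - 2 * (F z * G z)) + F z ^ (2-p) * G z ^ 2) ν :=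
    hI1.add hTint
  have hRsqInt : Integrable (fun z => R z ^ 2) ν :=
    hI2.congr (Filter.Eventually.of_forall fun z => (hRsq z).symm)
  have hRsqVal : ∫ z, R z ^ 2 ∂ν ≤ 2 * ε := by
    have h1 : ∫ z, R z ^ 2 ∂ν
        = (∫ z, F z ^ p ∂ν) - 2 * (∫ z, F z * G z ∂ν) + ∫ z, F z ^ (2-p) * G z ^ 2 ∂ν := by
      calc ∫ z, R z ^ 2 ∂ν
          = ∫ z, (F z ^ p - 2 * (F z * G z)) + F z ^ (2-p) * G z ^ 2 ∂ν :=
            integral_congr_ae (Filter.Eventually.of_forall hRsq)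
        _ = (∫ z, F z ^ p - 2 * (F z * G z) ∂ν) + ∫ z, F z ^ (2-p) * G z ^ 2 ∂ν :=
            integral_add hI1 hTint
        _ = ((∫ z, F z ^ p ∂ν) - ∫ z, 2 * (F z * G z) ∂ν) + ∫ z, F z ^ (2-p) * G z ^ 2 ∂ν := by
            rw [integral_sub hintF (hintFG.const_mul 2)]
        _ = (∫ z, F z ^ p ∂ν) - 2 * (∫ z, F z * G z ∂ν) + ∫ z, F z ^ (2-p) * G z ^ 2 ∂ν := by
            rw [integral_const_mul]
    rw [h1, hFone]
    linarith
  have hRsqNonneg : 0 ≤ ∫ z, R z ^ 2 ∂ν := integral_nonneg fun z => sq_nonneg _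
  -- Cauchy–Schwarz
  have h22 : Real.HolderConjugate 2 2 := Real.holderConjugate_iff.2 ⟨one_lt_two, by norm_num⟩
  have hmR : Measurable R := (hmF.pow_const _).sub ((hmF.pow_const _).mul hmG)
  have hmemu : MemLp (fun z => F z ^ (p/2)) (ENNReal.ofReal 2) ν := by
    refine memLp_of_integrable_rpow (fun z => Real.rpow_nonneg (hF z) _)
      (hmF.pow_const _).aestronglyMeasurable two_pos ?_
    refine hintF.congr ?_
    filter_upwards with z
    rw [rpow_two', ha z]
  have hmemv : MemLp (fun z => |R z|) (ENNReal.ofReal 2) ν := by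
    refine memLp_of_integrable_rpow (fun z => abs_nonneg _)
      hmR.abs.aestronglyMeasurable two_pos ?_
    refine hRsqInt.congr ?_
    filter_upwards with z
    rw [rpow_two', sq_abs]
  have hCS := integral_mul_le_Lp_mul_Lq_of_nonneg h22
    (Filter.Eventually.of_forall fun z => Real.rpow_nonneg (hF z) _)
    (Filter.Eventually.of_forall fun z => abs_nonneg (R z)) hmemu hmemv
  simp_rw [rpow_two', ha, sq_abs] at hCS
  calc ∫ z, |F z ^ p - F z * G z| ∂ν
      = ∫ z, F z ^ (p/2) * |R z| ∂ν := by
        refine integral_congr_ae (Filter.Eventually.of_forall fun z => ?_)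
        show |F z ^ p - F z * G z| = F z ^ (p/2) * |R z|
        rw [← abs_of_nonneg (Real.rpow_nonneg (hF z) (p/2)), ← abs_mul]
        congr 1
        rw [hRdef]
        simp only [mul_sub]
        rw [← sq, ha z, hab z]
    _ ≤ (∫ z, F z ^ p ∂ν) ^ (1/(2:ℝ)) * (∫ z, R z ^ 2 ∂ν) ^ (1/(2:ℝ)) := hCS
    _ = (∫ z, R z ^ 2 ∂ν) ^ (1/(2:ℝ)) := by rw [hFone, Real.one_rpow, one_mul]
    _ ≤ (2 * ε) ^ (1/(2:ℝ)) := Real.rpow_le_rpow hRsqNonneg hRsqVal (by norm_num)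
    _ = Real.sqrt (2 * ε) := (Real.sqrt_eq_rpow _).symm

theorem holder_stability_lemma
    {Z : Type*} [MeasurableSpace Z] (ν : Measure Z)
    (f g : Z → ℝ)
    (hf : ∀ z, 0 ≤ f z) (hg : ∀ z, 0 ≤ g z)
    (hmf : Measurable f) (hmg : Measurable g)
    (p q : ℝ) (hp1 : 1 < p) (hp2 : p ≤ 2) (hconj : 1 / p + 1 / q = 1)
    (hintf : Integrable (fun z => f z ^ p) ν)
    (hintg : Integrable (fun z => g z ^ q) ν)
    (hintfg : Integrable (fun z => f z * g z) ν)
    (hfpos : 0 < ∫ z, f z ^ p ∂ν) (hgpos : 0 < ∫ z, g z ^ q ∂ν)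
    (ε : ℝ) (hε : 0 < ε)
    (hgap : ∫ z, f z * g z ∂ν >
      (1 - ε) * ((∫ z, f z ^ p ∂ν) ^ (1 / p) * (∫ z, g z ^ q ∂ν) ^ (1 / q))) :
    ∫ z, |f z ^ p / (∫ w, f w ^ p ∂ν) -
        f z * g z / ((∫ w, f w ^ p ∂ν) ^ (1 / p) * (∫ w, g w ^ q ∂ν) ^ (1 / q))| ∂ν
      ≤ Real.sqrt (2 * ε) := by
  have hp0 : (0:ℝ) < p := zero_lt_one.trans hp1
  have hpq : Real.HolderConjugate p q := Real.holderConjugate_iff.2 ⟨hp1, by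
    rw [← one_div, ← one_div]; exact hconj⟩
  have hq0 : (0:ℝ) < q := hpq.symm.pos
  set A := ∫ z, f z ^ p ∂ν with hAdef
  set B := ∫ z, g z ^ q ∂ν with hBdef
  set c := A ^ (1/p) with hcdef
  set d := B ^ (1/q) with hddef
  have hc : 0 < c := Real.rpow_pos_of_pos hfpos _
  have hd : 0 < d := Real.rpow_pos_of_pos hgpos _
  have hcp : c ^ p = A := by
    rw [hcdef, ← Real.rpow_mul hfpos.le, one_div_mul_cancel (ne_of_gt hp0), Real.rpow_one]
  have hdq : d ^ q = B := by
    rw [hddef, ← Real.rpow_mul hgpos.le, one_div_mul_cancel (ne_of_gt hq0), Real.rpow_one]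
  set F : Z → ℝ := fun z => f z / c with hFdef
  set G : Z → ℝ := fun z => g z / d with hGdef
  have hFp : ∀ z, F z ^ p = f z ^ p / A := by
    intro z
    rw [hFdef, Real.div_rpow (hf z) hc.le, hcp]
  have hGq : ∀ z, G z ^ q = g z ^ q / B := by
    intro z
    rw [hGdef, Real.div_rpow (hg z) hd.le, hdq]
  have hFG : ∀ z, F z * G z = f z * g z / (c * d) := by
    intro z
    rw [hFdef, hGdef]
    ring
  have hintF : Integrable (fun z => F z ^ p) ν := by
    simp_rw [hFp]; exact hintf.div_const A
  have hintG : Integrable (fun z => G z ^ q) ν := by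
    simp_rw [hGq]; exact hintg.div_const B
  have hintFG : Integrable (fun z => F z * G z) ν := by
    simp_rw [hFG]; exact hintfg.div_const (c * d)
  have hFone : ∫ z, F z ^ p ∂ν = 1 := by
    simp_rw [hFp]
    rw [integral_div, ← hAdef, div_self (ne_of_gt hfpos)]
  have hGone : ∫ z, G z ^ q ∂ν = 1 := by
    simp_rw [hGq]
    rw [integral_div, ← hBdef, div_self (ne_of_gt hgpos)]
  have hgap' : ∫ z, F z * G z ∂ν > 1 - ε := by
    simp_rw [hFG]
    rw [integral_div, gt_iff_lt, lt_div_iff₀ (mul_pos hc hd)]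
    exact hgap
  have hkey := holder_stability_normalized ν F G
    (fun z => div_nonneg (hf z) hc.le) (fun z => div_nonneg (hg z) hd.le)
    (hmf.div_const c) (hmg.div_const d) p q hp1 hp2 hconj
    hintF hintG hintFG hFone hGone ε hε hgap'
  calc ∫ z, |f z ^ p / A - f z * g z / (c * d)| ∂ν
      = ∫ z, |F z ^ p - F z * G z| ∂ν := by
        refine integral_congr_ae (Filter.Eventually.of_forall fun z => ?_)
        show |f z ^ p / A - f z * g z / (c * d)| = |F z ^ p - F z * G z|
        rw [hFp, hFG]
    _ ≤ Real.sqrt (2 * ε) := hkey
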